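/- Let A be a ring with identity, A_0 a commutative subring, e_1,...,e_m a complete set of pairwise orthogonal idempotents of A each commuting with A_0, and for each i let S_i ⊆ e_i A_0 e_i be a multiplicative set containing e_i. Assume: (O1) for g, h ∈ A and s ∈ S_i, s e_i g = 0 implies e_i g = 0, and h e_i s = 0 implies h e_i = 0; (O2) for all i, j, a ∈ e_j A e_i, s ∈ S_i, t ∈ S_j, there exist b, c ∈ e_j A e_i, u ∈ S_j, v ∈ S_i with u a = b s and a v = t c. Then there exists a ring A[S_1,...,S_m] with an injective ring homomorphism φ: A → A[S_1,...,S_m] such that for every i and every s ∈ S_i, φ(s) is invertible in the unital ring φ(e_i) A[S_1,...,S_m] φ(e_i). -/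

import Mathlib

universe u

/-- Generalized Ore localization: under the generalized Ore conditions (O1), (O2) on
multiplicative sets `S i ⊆ e_i A₀ e_i` sitting in corners of a complete set of orthogonal
idempotents commuting with a commutative subring `A₀`, there is a ring `A[S_1,…,S_m]` with an
injective ring homomorphism `φ : A → A[S_1,…,S_m]` such that each `φ(s)`, `s ∈ S i`, is
invertible in the corner ring `φ(e_i) A[S_1,…,S_m] φ(e_i)` (with identity `φ(e_i)`). -/
theorem stmt7 (A : Type u) [Ring A] (A0 : Subring A)
    (hA0 : ∀ x y : A, x ∈ A0 → y ∈ A0 → x * y = y * x)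
    (m : ℕ) (e : Fin m → A)
    (hid : ∀ i, IsIdempotentElem (e i))
    (horth : ∀ i j, i ≠ j → e i * e j = 0)
    (hsum : ∑ i, e i = 1)
    (hcomm : ∀ f : A, f ∈ A0 → ∀ i, f * e i = e i * f)
    (S : Fin m → Set A)
    (hSe : ∀ i, e i ∈ S i)
    (hSmul : ∀ i, ∀ s ∈ S i, ∀ t ∈ S i, s * t ∈ S i)
    (hScorner : ∀ i, ∀ s ∈ S i, ∃ f ∈ A0, s = e i * f * e i)
    (O1 : ∀ i, ∀ s ∈ S i,
      (∀ g : A, s * (e i * g) = 0 → e i * g = 0) ∧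
      (∀ h : A, h * e i * s = 0 → h * e i = 0))
    (O2 : ∀ i j : Fin m, ∀ a : A, e j * a * e i = a → ∀ s ∈ S i, ∀ t ∈ S j,
      ∃ b c u v : A, e j * b * e i = b ∧ e j * c * e i = c ∧ u ∈ S j ∧ v ∈ S i ∧
        u * a = b * s ∧ a * v = t * c) :
    ∃ (B : Type u) (_ : Ring B) (φ : A →+* B),
      Function.Injective φ ∧
        ∀ i, ∀ s ∈ S i, ∃ x : B,
          φ (e i) * x * φ (e i) = x ∧ φ s * x = φ (e i) ∧ x * φ s = φ (e i) := by
  classical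
  -- basic facts about S i
  have hse : ∀ i, ∀ s ∈ S i, e i * s = s ∧ s * e i = s := by
    intro i s hs
    obtain ⟨f, hf, rfl⟩ := hScorner i s hs
    constructor
    · rw [← mul_assoc, ← mul_assoc, hid i]
    · rw [mul_assoc, mul_assoc, hid i, ← mul_assoc]
  have hso : ∀ i j : Fin m, i ≠ j → ∀ s ∈ S i, s * e j = 0 ∧ e j * s = 0 := by
    intro i j hij s hs
    constructor
    · rw [← (hse i s hs).2, mul_assoc, horth i j hij, mul_zero]
    · rw [← (hse i s hs).1, ← mul_assoc, horth j i (Ne.symm hij), zero_mul]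
  have hst0 : ∀ i j : Fin m, i ≠ j → ∀ s ∈ S i, ∀ t ∈ S j, s * t = 0 := by
    intro i j hij s hs t ht
    rw [← (hse j t ht).1, ← mul_assoc, (hso i j hij s hs).1, zero_mul]
  have scomm : ∀ i, ∀ s ∈ S i, ∀ t ∈ S i, s * t = t * s := by
    intro i s hs t ht
    obtain ⟨f, hf, rfl⟩ := hScorner i s hs
    obtain ⟨g, hg, rfl⟩ := hScorner i t ht
    have key : ∀ u v : A, u ∈ A0 → v ∈ A0 →
        (e i * u * e i) * (e i * v * e i) = e i * (u * v) * e i := by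
      intro u v hu hv
      calc (e i * u * e i) * (e i * v * e i)
          = e i * u * (e i * e i) * v * e i := by noncomm_ring
        _ = e i * u * e i * v * e i := by rw [hid i]
        _ = e i * (u * e i) * v * e i := by rw [mul_assoc (e i)]
        _ = e i * (e i * u) * v * e i := by rw [hcomm u hu i]
        _ = (e i * e i) * u * v * e i := by noncomm_ring
        _ = e i * (u * v) * e i := by rw [hid i, mul_assoc (e i)]
    rw [key f g hf hg, key g f hg hf, hA0 f g hf hg]
  -- corner helpers
  have hcornL : ∀ j i (b : A), e j * b * e i = b → e j * b = b := by
    intro j i b hb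
    conv_lhs => rw [← hb]
    rw [← mul_assoc, ← mul_assoc, hid j]
    exact hb
  have hcornR : ∀ j i (b : A), e j * b * e i = b → b * e i = b := by
    intro j i b hb
    conv_lhs => rw [← hb]
    rw [mul_assoc, mul_assoc, hid i, ← mul_assoc]
    exact hb
  have ha : ∀ (j i : Fin m) (r : A), e j * (e j * r * e i) * e i = e j * r * e i := by
    intro j i r
    rw [← mul_assoc, ← mul_assoc, hid j, mul_assoc, mul_assoc, hid i, ← mul_assoc]
  -- component extraction
  have hcompL : ∀ (f : Fin m → A), (∀ i, f i ∈ S i) → ∀ i, e i * (∑ j, f j) = f i := by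
    intro f hf i
    rw [Finset.mul_sum]
    rw [Finset.sum_eq_single i]
    · exact (hse i (f i) (hf i)).1
    · intro j _ hj
      exact (hso j i hj (f j) (hf j)).2
    · intro h; exact absurd (Finset.mem_univ i) h
  have hcompR : ∀ (f : Fin m → A), (∀ i, f i ∈ S i) → ∀ i, (∑ j, f j) * e i = f i := by
    intro f hf i
    rw [Finset.sum_mul]
    rw [Finset.sum_eq_single i]
    · exact (hse i (f i) (hf i)).2
    · intro j _ hj
      exact (hso j i hj (f j) (hf j)).1
    · intro h; exact absurd (Finset.mem_univ i) h
  -- regularity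
  have hregL : ∀ (f : Fin m → A), (∀ i, f i ∈ S i) → ∀ r : A, (∑ i, f i) * r = 0 → r = 0 := by
    intro f hf r h
    have h1 : ∀ i, e i * r = 0 := by
      intro i
      apply (O1 i (f i) (hf i)).1
      rw [← mul_assoc, (hse i (f i) (hf i)).2]
      calc f i * r = (e i * ∑ j, f j) * r := by rw [hcompL f hf i]
        _ = e i * ((∑ j, f j) * r) := by rw [mul_assoc]
        _ = 0 := by rw [h, mul_zero]
    calc r = 1 * r := (one_mul r).symm
      _ = (∑ i, e i) * r := by rw [hsum]
      _ = ∑ i, e i * r := by rw [Finset.sum_mul]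
      _ = 0 := by simp [h1]
  have hregR : ∀ (f : Fin m → A), (∀ i, f i ∈ S i) → ∀ r : A, r * (∑ i, f i) = 0 → r = 0 := by
    intro f hf r h
    have h1 : ∀ i, r * e i = 0 := by
      intro i
      apply (O1 i (f i) (hf i)).2
      rw [mul_assoc, (hse i (f i) (hf i)).1]
      calc r * f i = r * ((∑ j, f j) * e i) := by rw [hcompR f hf i]
        _ = r * (∑ j, f j) * e i := by rw [mul_assoc]
        _ = 0 := by rw [h, zero_mul]
    calc r = r * 1 := (mul_one r).symm
      _ = r * ∑ i, e i := by rw [hsum]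
      _ = ∑ i, r * e i := by rw [Finset.mul_sum]
      _ = 0 := by simp [h1]
  -- the denominator set
  set Dc : Set A := {x | ∃ f : Fin m → A, (∀ i, f i ∈ S i) ∧ x = ∑ i, f i} with hDc
  have honemem : (1 : A) ∈ Dc := ⟨e, hSe, hsum.symm⟩
  have hmulmem : ∀ x ∈ Dc, ∀ y ∈ Dc, x * y ∈ Dc := by
    rintro x ⟨f, hf, rfl⟩ y ⟨g, hg, rfl⟩
    refine ⟨fun i => f i * g i, fun i => hSmul i _ (hf i) _ (hg i), ?_⟩
    rw [Finset.sum_mul_sum]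
    refine Finset.sum_congr rfl fun i _ => ?_
    rw [Finset.sum_eq_single i]
    · intro j _ hj
      exact hst0 i j (Ne.symm hj) (f i) (hf i) (g j) (hg j)
    · intro h; exact absurd (Finset.mem_univ i) h
  let D : Submonoid A :=
    { carrier := Dc
      one_mem' := honemem
      mul_mem' := fun hx hy => hmulmem _ hx _ hy }
  have memD : ∀ x : A, x ∈ D ↔ x ∈ Dc := fun x => Iff.rfl
  -- common denominator lemma
  have hcd : ∀ (j : Fin m) (r : A) (f : Fin m → A), (∀ i, f i ∈ S i) →
      ∀ F : Finset (Fin m), ∃ u ∈ S j, ∀ i ∈ F, ∃ b : A,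
        e j * b * e i = b ∧ u * (e j * r * e i) = b * f i := by
    intro j r f hf F
    induction F using Finset.induction_on with
    | empty => exact ⟨e j, hSe j, fun i hi => absurd hi (Finset.notMem_empty i)⟩
    | @insert i₀ F hi₀ ih =>
      obtain ⟨u, hu, hF⟩ := ih
      obtain ⟨b, c, u', v, hb, hc, hu', hv, h1, h2⟩ :=
        O2 i₀ j (e j * r * e i₀) (ha j i₀ r) (f i₀) (hf i₀) (e j) (hSe j)
      refine ⟨u' * u, hSmul j _ hu' _ hu, ?_⟩
      intro i hi
      rcases Finset.mem_insert.mp hi with rfl | hiF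
      · refine ⟨u * b, ?_, ?_⟩
        · have e1 : e j * u = u := (hse j u hu).1
          calc e j * (u * b) * e i = e j * u * b * e i := by rw [← mul_assoc]
            _ = u * b * e i := by rw [e1]
            _ = u * (b * e i) := by rw [mul_assoc]
            _ = u * b := by rw [hcornR j i b hb]
        · rw [scomm j u' hu' u hu, mul_assoc, h1, ← mul_assoc]
      · obtain ⟨b', hb', h1'⟩ := hF i hiF
        refine ⟨u' * b', ?_, ?_⟩
        · have e1 : e j * u' = u' := (hse j u' hu').1
          calc e j * (u' * b') * e i = e j * u' * b' * e i := by rw [← mul_assoc]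
            _ = u' * b' * e i := by rw [e1]
            _ = u' * (b' * e i) := by rw [mul_assoc]
            _ = u' * b' := by rw [hcornR j i b' hb']
        · rw [mul_assoc, h1', ← mul_assoc]
  -- Ore condition
  have hore : ∀ (r : A) (s : D), ∃ (r' : A) (s' : D), (s' : A) * r = r' * (s : A) := by
    intro r s
    obtain ⟨f, hf, hs⟩ := s.2
    choose u hu hb using fun j => hcd j r f hf Finset.univ
    choose b hbc hbe using fun j i => hb j i (Finset.mem_univ i)
    refine ⟨∑ j, ∑ i, b j i, ⟨∑ j, u j, (memD _).mpr ⟨u, hu, rfl⟩⟩, ?_⟩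
    show (∑ j, u j) * r = (∑ j, ∑ i, b j i) * (s : A)
    rw [hs, Finset.sum_mul, Finset.sum_mul]
    refine Finset.sum_congr rfl fun j _ => ?_
    have huj : u j * r = ∑ i, u j * (e j * r * e i) := by
      have h1 : u j * r = u j * (e j * r) := by
        rw [← mul_assoc, (hse j (u j) (hu j)).2]
      rw [h1]
      have h2 : e j * r = ∑ i, e j * r * e i := by
        calc e j * r = e j * r * 1 := (mul_one _).symm
          _ = e j * r * ∑ i, e i := by rw [hsum]
          _ = ∑ i, e j * r * e i := by rw [Finset.mul_sum]
      conv_lhs => rw [h2]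
      rw [Finset.mul_sum]
    rw [huj, Finset.sum_mul]
    refine Finset.sum_congr rfl fun i _ => ?_
    rw [hbe j i]
    rw [Finset.mul_sum]
    rw [Finset.sum_eq_single i]
    · intro k _ hk
      rw [← hcornR j i (b j i) (hbc j i), mul_assoc, (hso k i hk (f k) (hf k)).2, mul_zero]
    · intro h; exact absurd (Finset.mem_univ i) h
  have hcancel : ∀ (r₁ r₂ : A) (s : D), r₁ * (s : A) = r₂ * (s : A) →
      ∃ s' : D, (s' : A) * r₁ = (s' : A) * r₂ := by
    intro r₁ r₂ s h
    obtain ⟨f, hf, hs⟩ := s.2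
    refine ⟨1, ?_⟩
    have : (r₁ - r₂) * (∑ i, f i) = 0 := by
      rw [sub_mul, ← hs, h, sub_self]
    have := hregR f hf _ this
    rw [sub_eq_zero] at this
    rw [this]
  obtain ⟨inst⟩ := OreLocalization.nonempty_oreSet_iff.mpr ⟨hcancel, hore⟩
  letI := inst
  refine ⟨OreLocalization D A, inferInstance, OreLocalization.numeratorRingHom, ?_, ?_⟩
  · have hS : D ≤ nonZeroDivisorsLeft A := by
      intro x hx
      obtain ⟨f, hf, rfl⟩ := (memD x).mp hx
      rw [mem_nonZeroDivisorsLeft_iff]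
      intro y hy
      exact hregL f hf y hy
    exact fun a b h => OreLocalization.numeratorHom_inj hS h
  · intro i s hs
    set F := (OreLocalization.numeratorRingHom : A →+* OreLocalization D A) with hF
    set g : Fin m → A := fun j => if j = i then s else e j with hg
    have hgS : ∀ j, g j ∈ S j := by
      intro j
      by_cases h : j = i
      · subst h; simpa [hg] using hs
      · simpa [hg, h] using hSe j
    set d : A := ∑ j, g j with hd
    have hdD : d ∈ D := (memD d).mpr ⟨g, hgS, rfl⟩
    have hde1 : e i * d = s := by rw [hd, hcompL g hgS i]; simp [hg]
    have hde2 : d * e i = s := by rw [hd, hcompR g hgS i]; simp [hg]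
    set U := OreLocalization.numeratorUnit (⟨d, hdD⟩ : D) with hUdef
    have hU : (U : OreLocalization D A) = F d := rfl
    have hidem : F (e i) * F (e i) = F (e i) := by rw [← map_mul, hid i]
    have hcommU : F (e i) * (U : OreLocalization D A) = (U : OreLocalization D A) * F (e i) := by
      rw [hU, ← map_mul, ← map_mul, hde1, hde2]
    have hz : (↑U⁻¹ : OreLocalization D A) * F (e i) = F (e i) * ↑U⁻¹ := by
      calc (↑U⁻¹ : OreLocalization D A) * F (e i)
          = ↑U⁻¹ * F (e i) * (↑U * ↑U⁻¹) := by rw [U.mul_inv, mul_one]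
        _ = ↑U⁻¹ * (F (e i) * ↑U) * ↑U⁻¹ := by noncomm_ring
        _ = ↑U⁻¹ * (↑U * F (e i)) * ↑U⁻¹ := by rw [hcommU]
        _ = (↑U⁻¹ * ↑U) * F (e i) * ↑U⁻¹ := by noncomm_ring
        _ = F (e i) * ↑U⁻¹ := by rw [U.inv_mul, one_mul]
    refine ⟨F (e i) * ↑U⁻¹, ?_, ?_, ?_⟩
    · calc F (e i) * (F (e i) * ↑U⁻¹) * F (e i)
          = (F (e i) * F (e i)) * ↑U⁻¹ * F (e i) := by noncomm_ring
        _ = F (e i) * ↑U⁻¹ * F (e i) := by rw [hidem]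
        _ = F (e i) * (F (e i) * ↑U⁻¹) := by rw [mul_assoc, ← hz]
        _ = (F (e i) * F (e i)) * ↑U⁻¹ := by rw [← mul_assoc]
        _ = F (e i) * ↑U⁻¹ := by rw [hidem]
    · calc F s * (F (e i) * ↑U⁻¹)
          = F (s * e i) * ↑U⁻¹ := by rw [← mul_assoc, ← map_mul]
        _ = F s * ↑U⁻¹ := by rw [(hse i s hs).2]
        _ = F (e i * d) * ↑U⁻¹ := by rw [hde1]
        _ = F (e i) * (F d * ↑U⁻¹) := by rw [map_mul, mul_assoc]
        _ = F (e i) * ((U : OreLocalization D A) * ↑U⁻¹) := by rw [hU]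
        _ = F (e i) := by rw [U.mul_inv, mul_one]
    · calc F (e i) * ↑U⁻¹ * F s
          = F (e i) * ↑U⁻¹ * (F d * F (e i)) := by rw [← map_mul, hde2]
        _ = F (e i) * (↑U⁻¹ * F d) * F (e i) := by noncomm_ring
        _ = F (e i) * ((↑U⁻¹ : OreLocalization D A) * ↑U) * F (e i) := by rw [hU]
        _ = F (e i) * F (e i) := by rw [U.inv_mul, mul_one]
        _ = F (e i) := hidem
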